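/- Let r > 1 and (G,≤) an ordered graph. Every (r,≤)-chain uLv of length t decomposes uniquely as a concatenation v₀L₁'v₁ v₁L₂'v₂ ⋯ v_{t'−1}L_{t'}'v_{t'} with v₀ = u, v_{t'} = v, where each piece v_{i−1}L_i'v_i is an (r,≤)-admissible path. -/

import Mathlib

open SimpleGraph

variable {V : Type*}

/-- The segment of the walk `w` between positions `i < j` is an admissible path:
its final vertex is smaller than its first and all internal vertices exceed the first. -/
def AdmSeg [LinearOrder V] (G : SimpleGraph V) {u v : V} (w : G.Walk u v) (i j : ℕ) : Prop :=
  i < j ∧ j ≤ w.length ∧ w.getVert j < w.getVert i ∧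
    ∀ k, i < k → k < j → w.getVert i < w.getVert k

lemma getVert_injOn' {G : SimpleGraph V} {u v : V} (w : G.Walk u v) (h : w.IsPath) :
    ∀ i j, i ≤ w.length → j ≤ w.length → w.getVert i = w.getVert j → i = j := by
  induction w with
  | nil => intro i j hi hj _; simp at hi hj; omega
  | cons h' p ih =>
    intro i j hi hj hij
    rw [Walk.cons_isPath_iff] at h
    match i, j with
    | 0, 0 => rfl
    | 0, k+1 =>
      exfalso; apply h.2
      rw [Walk.getVert_cons_succ] at hij
      rw [Walk.mem_support_iff_exists_getVert]
      exact ⟨k, hij.symm, by simpa using hj⟩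
    | k+1, 0 =>
      exfalso; apply h.2
      rw [Walk.getVert_cons_succ] at hij
      rw [Walk.mem_support_iff_exists_getVert]
      exact ⟨k, hij, by simpa using hi⟩
    | k+1, l+1 =>
      rw [Walk.getVert_cons_succ, Walk.getVert_cons_succ] at hij
      have := ih h.1 k l (by simpa using hi) (by simpa using hj) hij
      omega

/-- fueled orbit of `f` starting at `i`, stopping once the position is `≥ n`. -/
def orbitAux (f : ℕ → ℕ) (n : ℕ) : ℕ → ℕ → List ℕ
  | 0, i => [i]
  | fuel+1, i => if i < n then i :: orbitAux f n fuel (f i) else [i]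

lemma orbitAux_ne_nil (f : ℕ → ℕ) (n fuel i : ℕ) : orbitAux f n fuel i ≠ [] := by
  cases fuel with
  | zero => simp [orbitAux]
  | succ m => simp only [orbitAux]; split <;> simp

lemma orbitAux_head (f : ℕ → ℕ) (n fuel i : ℕ) : (orbitAux f n fuel i).head? = some i := by
  cases fuel with
  | zero => simp [orbitAux]
  | succ m => simp only [orbitAux]; split <;> simp

lemma getLast?_cons_ne (a : ℕ) (l : List ℕ) (h : l ≠ []) :
    (a :: l).getLast? = l.getLast? := by
  cases l with
  | nil => exact absurd rfl h
  | cons b t => exact List.getLast?_cons_cons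

lemma orbitAux_spec (f : ℕ → ℕ) (n : ℕ) (hf : ∀ i, i < n → i < f i ∧ f i ≤ n) :
    ∀ fuel i, i ≤ n → n - i ≤ fuel →
      (orbitAux f n fuel i).getLast? = some n ∧
      (orbitAux f n fuel i).Chain' (fun x y => y = f x ∧ x < n) := by
  intro fuel
  induction fuel with
  | zero =>
    intro i h1 h2
    have hin : i = n := by omega
    subst hin
    exact ⟨by simp [orbitAux], by simp [orbitAux]; exact List.isChain_singleton _⟩
  | succ m ih =>
    intro i h1 h2
    simp only [orbitAux]
    split
    · rename_i hi
      obtain ⟨hlt, hle⟩ := hf i hi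
      have IH := ih (f i) hle (by omega)
      constructor
      · rw [getLast?_cons_ne i _ (orbitAux_ne_nil f n m (f i))]
        exact IH.1
      · refine List.isChain_cons.mpr ?_
        refine ⟨?_, IH.2⟩
        intro y hy
        rw [orbitAux_head] at hy
        refine ⟨?_, hi⟩
        injection hy with hy'
        exact hy'.symm
    · rename_i hi
      have : i = n := by omega
      simp [this]; exact List.isChain_singleton _

/-- uniqueness of lists with given head, last `n`, and deterministic chain relation. -/
lemma orbit_unique (f : ℕ → ℕ) (n : ℕ) :
    ∀ (L1 L2 : List ℕ) (a : ℕ),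
      L1.head? = some a → L1.getLast? = some n →
      L1.Chain' (fun x y => y = f x ∧ x < n) →
      L2.head? = some a → L2.getLast? = some n →
      L2.Chain' (fun x y => y = f x ∧ x < n) → L1 = L2 := by
  intro L1
  induction L1 with
  | nil => intro L2 a h; simp at h
  | cons b t ih =>
    intro L2 a h1 h2 h3 h4 h5 h6
    have hb : b = a := by simpa using h1
    cases L2 with
    | nil => simp at h4
    | cons c t2 =>
      have hc : c = a := by simpa using h4
      cases t with
      | nil =>
        have hbn : b = n := by simpa using h2
        cases t2 with
        | nil =>
          have hcn : c = n := by simpa using h5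
          rw [hbn, hcn]
        | cons d t2' =>
          replace h6 := List.isChain_cons_cons.mp h6
          exact absurd (by omega : ¬ c < n) (not_not_intro h6.1.2)
      | cons d t' =>
        replace h3 := List.isChain_cons_cons.mp h3
        cases t2 with
        | nil =>
          have hcn : c = n := by simpa using h5
          exact absurd (by omega : ¬ b < n) (not_not_intro h3.1.2)
        | cons e t2' =>
          replace h6 := List.isChain_cons_cons.mp h6
          have hd : d = f b := h3.1.1
          have he : e = f b := by rw [h6.1.1, hc, ← hb]
          have heq : d :: t' = e :: t2' := by
            refine ih (e :: t2') (f b) (by simp [hd]) ?_ h3.2 (by simp [he]) ?_ h6.2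
            · rw [getLast?_cons_ne _ _ (by simp)] at h2; exact h2
            · rw [getLast?_cons_ne _ _ (by simp)] at h5; exact h5
          rw [heq, hb, hc]


/-- Every `(r,≤)`-chain decomposes uniquely as a concatenation of `(r,≤)`-admissible paths:
there is a unique list of cut positions `0 = k₀ < k₁ < ⋯ < k_{t'} = length w` such that
each consecutive segment is an admissible path of length at most `r`. -/
theorem stmt3 [LinearOrder V] (G : SimpleGraph V) (r : ℕ) (hr : 1 < r) {u v : V}
    (w : G.Walk u v) (hpath : w.IsPath)
    (hchain : ∀ k, k < w.length → v < w.getVert k)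
    (hrchain : ∀ i j, AdmSeg G w i j → j - i ≤ r) :
    ∃! L : List ℕ, L.head? = some 0 ∧ L.getLast? = some w.length ∧
      L.Chain' (fun i j => AdmSeg G w i j ∧ j - i ≤ r) := by
  classical
  set n := w.length with hn
  have hinj := getVert_injOn' w hpath
  -- the "next cut" function
  set S : ℕ → Set ℕ := fun i => {j | i < j ∧ j ≤ n ∧ w.getVert j < w.getVert i} with hS
  set f : ℕ → ℕ := fun i => sInf (S i) with hfdef
  have hSne : ∀ i, i < n → n ∈ S i := by
    intro i hi
    refine ⟨hi, le_refl n, ?_⟩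
    rw [hn, Walk.getVert_length]
    exact hchain i hi
  have hmem : ∀ i, i < n → f i ∈ S i := fun i hi => Nat.sInf_mem ⟨n, hSne i hi⟩
  have hf : ∀ i, i < n → i < f i ∧ f i ≤ n := fun i hi => ⟨(hmem i hi).1, (hmem i hi).2.1⟩
  -- each step is admissible
  have hadm : ∀ i, i < n → AdmSeg G w i (f i) := by
    intro i hi
    obtain ⟨h1, h2, h3⟩ := hmem i hi
    refine ⟨h1, h2, h3, ?_⟩
    intro k hik hkf
    have hkn : ¬ k ∈ S i := Nat.notMem_of_lt_sInf hkf
    have : ¬ w.getVert k < w.getVert i := fun hc => hkn ⟨hik, by omega, hc⟩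
    rcases lt_or_eq_of_le (not_lt.mp this) with h | h
    · exact h
    · exact absurd (hinj i k (by omega) (by omega) h) (by omega)
  -- any admissible segment ends at f i
  have huniq : ∀ i j, AdmSeg G w i j → j = f i := by
    intro i j ⟨h1, h2, h3, h4⟩
    have hjS : j ∈ S i := ⟨h1, h2, h3⟩
    have hle : f i ≤ j := Nat.sInf_le hjS
    rcases lt_or_eq_of_le hle with hlt | heq
    · exfalso
      have hi : i < n := by omega
      have := h4 (f i) (hf i hi).1 hlt
      exact absurd (hmem i hi).2.2 (not_lt.mpr this.le)
    · omega
  -- the candidate list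
  set L := orbitAux f n n 0 with hL
  have hspec := orbitAux_spec f n hf n 0 (Nat.zero_le n) (by omega)
  refine ⟨L, ⟨orbitAux_head f n n 0, hspec.1, ?_⟩, ?_⟩
  · refine hspec.2.imp ?_
    intro x y ⟨hy, hx⟩
    subst hy
    exact ⟨hadm x hx, hrchain x (f x) (hadm x hx)⟩
  · rintro L' ⟨h1, h2, h3⟩
    refine orbit_unique f n L' L 0 h1 h2 ?_ (orbitAux_head f n n 0) hspec.1 hspec.2
    refine h3.imp ?_
    intro x y ⟨ha, _⟩
    exact ⟨huniq x y ha, by have := ha.1; have := ha.2.1; omega⟩
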